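/- Let C ∈ ℂ^{r×c} and R ∈ ℂ^{r×n} be matrices with rank(R) = rank(C) = k, and let w^(1), …, w^(k) ∈ ℂ^r be an orthonormal system of vectors spanning the column space of C such that Σ_{ℓ=1}^k w^(ℓ)(w^(ℓ))† equals the orthogonal projection onto the column space of C, and ⟨w^(i), C C† w^(j)⟩ = δ_{ij}·σ̃_i² for positive reals σ̃_1, …, σ̃_k, where δ_{ij} is the Kronecker delta. Suppose ‖R R† − C C†‖ ≤ γ. Define ṽ^(ℓ) := R† w^(ℓ) / σ̃_ℓ. Then for all i, j ∈ {1,…,k}: |⟨ṽ^(i), ṽ^(j)⟩ − δ_{ij}| ≤ γ/(σ̃_i σ̃_j). -/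

import Mathlib

open Matrix

/-- The continuous linear map on Euclidean spaces induced by a complex matrix. -/
noncomputable def toELin {m n : ℕ} (M : Matrix (Fin m) (Fin n) ℂ) :
    EuclideanSpace ℂ (Fin n) →L[ℂ] EuclideanSpace ℂ (Fin m) :=
  LinearMap.toContinuousLinearMap (Matrix.toEuclideanLin M)

/-- Let `C ∈ ℂ^{r×c}`, `R ∈ ℂ^{r×n}` with `rank R = rank C = k`, let
`w⁽¹⁾,…,w⁽ᵏ⁾` be an orthonormal system spanning the column space of `C` (so that
`Σ w⁽ˡ⁾(w⁽ˡ⁾)†` is the orthogonal projection onto the column space of `C`), with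
`⟨w⁽ⁱ⁾, CC† w⁽ʲ⁾⟩ = δᵢⱼ σ̃ᵢ²` for positive reals `σ̃ᵢ`. If `‖RR† − CC†‖ ≤ γ` and
`ṽ⁽ˡ⁾ := R†w⁽ˡ⁾/σ̃ₗ`, then `|⟨ṽ⁽ⁱ⁾, ṽ⁽ʲ⁾⟩ − δᵢⱼ| ≤ γ/(σ̃ᵢσ̃ⱼ)` for all `i, j`. -/
lemma toELin_apply_eq {m n : ℕ} (M : Matrix (Fin m) (Fin n) ℂ) (x : EuclideanSpace ℂ (Fin n)) :
    toELin M x = Matrix.toEuclideanLin M x := rfl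

lemma toELin_mul {m n p : ℕ} (A : Matrix (Fin m) (Fin n) ℂ) (B : Matrix (Fin n) (Fin p) ℂ)
    (x : EuclideanSpace ℂ (Fin p)) :
    toELin (A * B) x = toELin A (toELin B x) := by
  simp [toELin_apply_eq, Matrix.toEuclideanLin_apply, Matrix.mulVec_mulVec]

lemma adj_inner {m n : ℕ} (R : Matrix (Fin m) (Fin n) ℂ)
    (x y : EuclideanSpace ℂ (Fin m)) :
    (inner ℂ (toELin Rᴴ x) (toELin Rᴴ y) : ℂ) = inner ℂ x (toELin (R * Rᴴ) y) := by
  rw [toELin_mul]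
  have h : toELin Rᴴ x = LinearMap.adjoint (Matrix.toEuclideanLin R) x := by
    rw [toELin_apply_eq, Matrix.toEuclideanLin_conjTranspose_eq_adjoint]
  rw [h, LinearMap.adjoint_inner_left]
  rfl

lemma inner_bound {m n : ℕ} (M : Matrix (Fin m) (Fin n) ℂ)
    (x : EuclideanSpace ℂ (Fin m)) (y : EuclideanSpace ℂ (Fin n))
    (hx : ‖x‖ = 1) (hy : ‖y‖ = 1) :
    ‖(inner ℂ x (toELin M y) : ℂ)‖ ≤ ‖toELin M‖ := by
  calc ‖(inner ℂ x (toELin M y) : ℂ)‖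
      ≤ ‖x‖ * ‖toELin M y‖ := norm_inner_le_norm _ _
    _ ≤ ‖x‖ * (‖toELin M‖ * ‖y‖) :=
        mul_le_mul_of_nonneg_left ((toELin M).le_opNorm _) (norm_nonneg _)
    _ = ‖toELin M‖ := by rw [hx, hy]; ring

set_option maxHeartbeats 1000000 in
theorem stmt_3 {r c n k : ℕ} (C : Matrix (Fin r) (Fin c) ℂ) (R : Matrix (Fin r) (Fin n) ℂ)
    (hC : C.rank = k) (hR : R.rank = k)
    (w : Fin k → EuclideanSpace ℂ (Fin r)) (hw : Orthonormal ℂ w)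
    (hspan : Submodule.span ℂ (Set.range w) = LinearMap.range (toELin C).toLinearMap)
    (σ : Fin k → ℝ) (hσ : ∀ i, 0 < σ i)
    (hsing : ∀ i j, (inner ℂ (w i) (toELin (C * Cᴴ) (w j)) : ℂ) =
      if i = j then ((σ i : ℂ)) ^ 2 else 0)
    (γ : ℝ) (hγ : ‖toELin (R * Rᴴ - C * Cᴴ)‖ ≤ γ)
    (v : Fin k → EuclideanSpace ℂ (Fin n))
    (hv : ∀ ℓ, v ℓ = ((σ ℓ : ℂ))⁻¹ • toELin Rᴴ (w ℓ)) :
    ∀ i j, ‖(inner ℂ (v i) (v j) : ℂ) - if i = j then 1 else 0‖ ≤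
      γ / (σ i * σ j) := by
  intro i j
  have hσi := hσ i
  have hσj := hσ j
  have hwn : ∀ ℓ, ‖w ℓ‖ = 1 := fun ℓ => hw.1 ℓ
  have hsub : toELin (R * Rᴴ - C * Cᴴ) (w j)
      = toELin (R * Rᴴ) (w j) - toELin (C * Cᴴ) (w j) := by
    simp only [toELin_apply_eq, map_sub, LinearMap.sub_apply]
  have hinner : (inner ℂ (v i) (v j) : ℂ)
      = ((σ i : ℂ))⁻¹ * ((σ j : ℂ))⁻¹ * inner ℂ (w i) (toELin (R * Rᴴ) (w j)) := by
    rw [hv, hv, inner_smul_left, inner_smul_right, adj_inner]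
    simp [Complex.conj_ofReal, mul_assoc]
  have key : (inner ℂ (v i) (v j) : ℂ) - (if i = j then 1 else 0)
      = ((σ i : ℂ))⁻¹ * ((σ j : ℂ))⁻¹ * inner ℂ (w i) (toELin (R * Rᴴ - C * Cᴴ) (w j)) := by
    rw [hinner, hsub, inner_sub_right, hsing, mul_sub]
    congr 1
    by_cases h : i = j
    · subst h
      have hne : (σ i : ℂ) ≠ 0 := Complex.ofReal_ne_zero.mpr (hσ i).ne'
      simp only [eq_self_iff_true, if_true]
      field_simp
    · simp [h]
  rw [key]
  rw [norm_mul, norm_mul]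
  have h1 : ‖((σ i : ℂ))⁻¹‖ = (σ i)⁻¹ := by
    simp [abs_of_pos hσi]
  have h2 : ‖((σ j : ℂ))⁻¹‖ = (σ j)⁻¹ := by
    simp [abs_of_pos hσj]
  rw [h1, h2]
  have hb : ‖(inner ℂ (w i) (toELin (R * Rᴴ - C * Cᴴ) (w j)) : ℂ)‖ ≤ γ :=
    (inner_bound _ _ _ (hwn i) (hwn j)).trans hγ
  rw [div_eq_inv_mul, mul_inv, mul_assoc]
  have : (σ i)⁻¹ * ((σ j)⁻¹ * ‖(inner ℂ (w i) (toELin (R * Rᴴ - C * Cᴴ) (w j)) : ℂ)‖)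
      ≤ (σ i)⁻¹ * ((σ j)⁻¹ * γ) := by
    gcongr
  linarith [this]
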